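/- Core quantitative inequality in the proof of Theorem 1: let P, Q be disjoint finite index sets with P nonempty and Q nonempty, embeddings h_i ∈ ℝ^d (i ∈ P) and h_j ∈ ℝ^d (j ∈ Q), N = |P| + |Q|, τ > 0, and let q = (1/N)( Σ_{i∈P} h_i + Σ_{j∈Q} h_j ) be the mean readout. If ⟨q, h_i⟩ = 1 for every i ∈ P (perfect alignment), then the context-aware contrastive loss satisfies L(q) ≥ −1/τ + (1/(|Q| · N · τ)) · Σ_{j∈Q} ( Σ_{i∈P} ⟨h_i, h_j⟩ + Σ_{k∈Q} ⟨h_k, h_j⟩ ); i.e. the loss is bounded below, up to the constant −1/τ, by the average of the normal–abnormal and abnormal–abnormal similarity sums scaled by 1/(Nτ). -/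
import Mathlib


open Finset Real
open scoped InnerProductSpace

set_option maxHeartbeats 1000000 in
/-- Core quantitative inequality in the proof of Theorem 1: with the mean readout
`q = (1/N) • (∑ i ∈ P, h i + ∑ j ∈ Q, h j)`, `N = |P| + |Q|`, and perfect
alignment `⟪q, h i⟫ = 1` on positives, the context-aware contrastive loss is
bounded below by `-1/τ` plus the average of the normal–abnormal and
abnormal–abnormal similarity sums scaled by `1/(N·τ)`. -/
theorem contrastive_loss_similarity_lower_bound
    {d : ℕ} {ι : Type*} (P Q : Finset ι) (hPQ : Disjoint P Q)
    (hP : P.Nonempty) (hQ : Q.Nonempty)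
    (h : ι → EuclideanSpace ℝ (Fin d)) (τ : ℝ) (hτ : 0 < τ)
    (N : ℕ) (hN : N = P.card + Q.card)
    (q : EuclideanSpace ℝ (Fin d))
    (hq : q = (1 / (N : ℝ)) • (∑ i ∈ P, h i + ∑ j ∈ Q, h j))
    (halign : ∀ i ∈ P, ⟪q, h i⟫_ℝ = 1) :
    (1 / (P.card : ℝ)) * ∑ i ∈ P,
        -Real.log (Real.exp (⟪q, h i⟫_ℝ / τ) /
          (∑ j ∈ Q, Real.exp (⟪q, h j⟫_ℝ / τ) + Real.exp (⟪q, h i⟫_ℝ / τ)))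
      ≥ -1 / τ + (1 / ((Q.card : ℝ) * (N : ℝ) * τ)) *
          ∑ j ∈ Q, (∑ i ∈ P, ⟪h i, h j⟫_ℝ + ∑ k ∈ Q, ⟪h k, h j⟫_ℝ) := by
  have hPc : (0:ℝ) < P.card := by exact_mod_cast hP.card_pos
  have hQc : (0:ℝ) < Q.card := by exact_mod_cast hQ.card_pos
  have hNpos : (0:ℝ) < N := by
    have : 0 < N := by rw [hN]; exact Nat.add_pos_left hP.card_pos _
    exact_mod_cast this
  set S : ℝ := ∑ j ∈ Q, Real.exp (⟪q, h j⟫_ℝ / τ) with hS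
  have hSpos : 0 < S := Finset.sum_pos (fun j _ => Real.exp_pos _) hQ
  clear_value S
  -- rewrite the similarity sums via q
  have hinner : ∀ j, (∑ i ∈ P, ⟪h i, h j⟫_ℝ + ∑ k ∈ Q, ⟪h k, h j⟫_ℝ)
      = (N : ℝ) * ⟪q, h j⟫_ℝ := by
    intro j
    rw [hq, real_inner_smul_left, inner_add_left, sum_inner, sum_inner]
    field_simp
  -- each exponent is ≤ log S
  have hle : ∀ j ∈ Q, ⟪q, h j⟫_ℝ / τ ≤ Real.log S := by
    intro j hj
    rw [Real.le_log_iff_exp_le hSpos, hS]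
    exact Finset.single_le_sum (f := fun j => Real.exp (⟪q, h j⟫_ℝ / τ))
      (fun k _ => (Real.exp_pos _).le) hj
  have hsum_le : ∑ j ∈ Q, ⟪q, h j⟫_ℝ / τ ≤ (Q.card : ℝ) * Real.log S := by
    calc ∑ j ∈ Q, ⟪q, h j⟫_ℝ / τ ≤ ∑ _j ∈ Q, Real.log S :=
          Finset.sum_le_sum hle
      _ = (Q.card : ℝ) * Real.log S := by rw [Finset.sum_const, nsmul_eq_mul]
  -- simplify LHS
  have hterm : ∀ i ∈ P,
      -Real.log (Real.exp (⟪q, h i⟫_ℝ / τ) / (S + Real.exp (⟪q, h i⟫_ℝ / τ)))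
        = Real.log (S + Real.exp (1 / τ)) - 1 / τ := by
    intro i hi
    rw [halign i hi]
    rw [Real.log_div (Real.exp_ne_zero _) ((add_pos hSpos (Real.exp_pos _)).ne'), Real.log_exp]
    ring
  have hLHS : (1 / (P.card : ℝ)) * ∑ i ∈ P,
      -Real.log (Real.exp (⟪q, h i⟫_ℝ / τ) /
        (S + Real.exp (⟪q, h i⟫_ℝ / τ)))
      = Real.log (S + Real.exp (1 / τ)) - 1 / τ := by
    rw [Finset.sum_congr rfl hterm, Finset.sum_const, nsmul_eq_mul]
    rw [one_div, inv_mul_cancel_left₀ hPc.ne']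
  rw [hLHS, ge_iff_le]
  have hRHS : ∑ j ∈ Q, (∑ i ∈ P, ⟪h i, h j⟫_ℝ + ∑ k ∈ Q, ⟪h k, h j⟫_ℝ)
      = (N : ℝ) * ∑ j ∈ Q, ⟪q, h j⟫_ℝ := by
    rw [Finset.sum_congr rfl (fun j _ => hinner j), ← Finset.mul_sum]
  rw [hRHS]
  have hlogmono : Real.log S ≤ Real.log (S + Real.exp (1 / τ)) :=
    Real.log_le_log hSpos (le_add_of_nonneg_right (Real.exp_pos _).le)
  have hsum' : ∑ j ∈ Q, ⟪q, h j⟫_ℝ = τ * ∑ j ∈ Q, ⟪q, h j⟫_ℝ / τ := by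
    rw [Finset.mul_sum]; exact Finset.sum_congr rfl fun j _ => by field_simp
  rw [hsum']
  have key : (1 / ((Q.card : ℝ) * (N : ℝ) * τ)) * ((N : ℝ) * (τ * ∑ j ∈ Q, ⟪q, h j⟫_ℝ / τ))
      ≤ Real.log S := by
    have : (1 / ((Q.card : ℝ) * (N : ℝ) * τ)) * ((N : ℝ) * (τ * ∑ j ∈ Q, ⟪q, h j⟫_ℝ / τ))
        = (∑ j ∈ Q, ⟪q, h j⟫_ℝ / τ) / (Q.card : ℝ) := by
      rw [div_mul_eq_mul_div, one_mul,
        div_eq_div_iff (mul_pos (mul_pos hQc hNpos) hτ).ne' hQc.ne']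
      ring
    rw [this, div_le_iff₀ hQc]
    calc (∑ j ∈ Q, ⟪q, h j⟫_ℝ / τ) ≤ (Q.card : ℝ) * Real.log S := hsum_le
        _ = Real.log S * (Q.card : ℝ) := by ring
  have hdiv : (-1:ℝ) / τ = -(1 / τ) := by ring
  linarith
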